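/- For n ≥ 2, define g_i(q) = Σ_{j=0}^{i−2} q^{1+2j} and the 2×2 matrix product A_n(q) = ∏_{i=2}^{n} [[1, 1],[g_i(q), 0]]. Then the inversion polynomial over involutions satisfies I_n^{inv}(q) = (A_n(q))_{1,1} + (A_n(q))_{2,1}, where I_n^{inv}(q) = Σ_{σ∈I_n} q^{inv(σ)}. -/

import Mathlib

noncomputable section
open Finset Polynomial

/-- The set of involutions in the symmetric group on `Fin n`. -/
def Invols (n : ℕ) : Finset (Equiv.Perm (Fin n)) :=
  Finset.univ.filter (fun σ => σ * σ = 1)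

/-- The set of fixed-point-free involutions in the symmetric group on `Fin n`. -/
def FPFInvols (n : ℕ) : Finset (Equiv.Perm (Fin n)) :=
  Finset.univ.filter (fun σ => σ * σ = 1 ∧ ∀ i, σ i ≠ i)

/-- The number of inversions of a permutation of `Fin n`. -/
def invStat {n : ℕ} (σ : Equiv.Perm (Fin n)) : ℕ :=
  ((Finset.univ : Finset (Fin n × Fin n)).filter
    (fun p => p.1 < p.2 ∧ σ p.2 < σ p.1)).card

/-- The generating polynomial of inversions over involutions of `S_n`. -/
def IPoly (n : ℕ) : Polynomial ℚ := ∑ σ ∈ Invols n, Polynomial.X ^ invStat σ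

/-- The generating polynomial of inversions over fixed-point-free involutions of `S_n`. -/
def JPoly (n : ℕ) : Polynomial ℚ := ∑ σ ∈ FPFInvols n, Polynomial.X ^ invStat σ

/-- `g_i(q) = Σ_{j=0}^{i-2} q^{1+2j}`. -/
def gPoly (i : ℕ) : Polynomial ℚ := ∑ j ∈ Finset.range (i - 1), X ^ (1 + 2 * j)

/-- The matrix product `A_n(q) = ∏_{i=2}^{n} [[1,1],[g_i(q),0]]`, taken in
order of increasing `i`. -/
def Amat (n : ℕ) : Matrix (Fin 2) (Fin 2) (Polynomial ℚ) :=
  ((List.range (n - 1)).map (fun j => !![1, 1; gPoly (j + 2), 0])).prod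

namespace InvProof
open Equiv Fin
variable {m n : ℕ}

def ext (σ : Perm (Fin m)) : Perm (Fin (m+1)) :=
  finSuccEquivLast.symm.permCongr σ.optionCongr

@[simp] lemma ext_castSucc (σ : Perm (Fin m)) (i : Fin m) :
    ext σ (castSucc i) = castSucc (σ i) := by
  simp [ext, Equiv.permCongr_apply]

@[simp] lemma ext_last (σ : Perm (Fin m)) : ext σ (last m) = last m := by
  simp [ext, Equiv.permCongr_apply]

def insFix (k : Fin (m+1)) (σ : Perm (Fin m)) : Perm (Fin (m+1)) :=
  (finSuccEquiv' k).symm.permCongr σ.optionCongr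

@[simp] lemma insFix_self (k : Fin (m+1)) (σ : Perm (Fin m)) : insFix k σ k = k := by
  simp [insFix, Equiv.permCongr_apply, finSuccEquiv'_at]

@[simp] lemma insFix_succAbove (k : Fin (m+1)) (σ : Perm (Fin m)) (i : Fin m) :
    insFix k σ (k.succAbove i) = k.succAbove (σ i) := by
  simp [insFix, Equiv.permCongr_apply, finSuccEquiv'_succAbove]

/-- order embedding of `Fin n` into `Fin (n+2)` avoiding `castSucc k` and `last`. -/
def emb (k : Fin (n+1)) (i : Fin n) : Fin (n+2) := castSucc (k.succAbove i)

lemma emb_injective (k : Fin (n+1)) : Function.Injective (emb k) := fun i j hij => by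
  simpa [emb] using Fin.succAbove_right_injective (castSucc_injective _ hij)

lemma emb_lt_iff (k : Fin (n+1)) {i j : Fin n} : emb k i < emb k j ↔ i < j := by
  simp [emb, Fin.castSucc_lt_castSucc_iff, Fin.succAbove_lt_succAbove_iff]

lemma emb_ne_castSucc (k : Fin (n+1)) (i : Fin n) : emb k i ≠ castSucc k := by
  simp [emb, Fin.castSucc_inj]

lemma emb_ne_last (k : Fin (n+1)) (i : Fin n) : emb k i ≠ last (n+1) :=
  (Fin.castSucc_lt_last _).ne

lemma cases3 (k : Fin (n+1)) (x : Fin (n+2)) :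
    x = last (n+1) ∨ x = castSucc k ∨ ∃ i, x = emb k i := by
  rcases eq_or_ne x (last (n+1)) with h | h
  · exact Or.inl h
  · rcases Fin.exists_castSucc_eq.mpr h with ⟨y, rfl⟩
    rcases eq_or_ne y k with h2 | h2
    · exact Or.inr (Or.inl (by rw [h2]))
    · rcases Fin.exists_succAbove_eq h2 with ⟨i, hi⟩
      exact Or.inr (Or.inr ⟨i, by rw [← hi]; rfl⟩)

def F (k : Fin (n+1)) (σ : Perm (Fin n)) : Perm (Fin (n+2)) :=
  Equiv.swap (castSucc k) (last (n+1)) * ext (insFix k σ)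

@[simp] lemma F_emb (k : Fin (n+1)) (σ : Perm (Fin n)) (i : Fin n) :
    F k σ (emb k i) = emb k (σ i) := by
  simp only [F, Perm.mul_apply, emb, ext_castSucc, insFix_succAbove]
  exact Equiv.swap_apply_of_ne_of_ne (emb_ne_castSucc k (σ i)) (emb_ne_last k (σ i))

@[simp] lemma F_castSucc_self (k : Fin (n+1)) (σ : Perm (Fin n)) :
    F k σ (castSucc k) = last (n+1) := by
  simp [F, Perm.mul_apply]

@[simp] lemma F_last (k : Fin (n+1)) (σ : Perm (Fin n)) :
    F k σ (last (n+1)) = castSucc k := by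
  simp [F, Perm.mul_apply]

lemma invStat_eq_sum (σ : Perm (Fin m)) :
    invStat σ = ∑ a : Fin m, ∑ b : Fin m, if a < b ∧ σ b < σ a then 1 else 0 := by
  rw [invStat, Finset.card_filter, Fintype.sum_prod_type]

@[simp] lemma not_last_lt (x : Fin (m+1)) : ¬ last m < x := not_lt.2 (Fin.le_last x)

lemma inv_ext (σ : Perm (Fin m)) : invStat (ext σ) = invStat σ := by
  rw [invStat_eq_sum, invStat_eq_sum]
  rw [Fin.sum_univ_castSucc]
  simp only [Fin.sum_univ_castSucc]
  simp [Fin.castSucc_lt_castSucc_iff, Fin.castSucc_lt_last]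


lemma count1 (k : Fin (n+1)) :
    (∑ j : Fin n, if k ≤ castSucc j then 1 else 0) = n - k := by
  have : ∀ j : Fin n, (k ≤ castSucc j) ↔ ((k:ℕ) ≤ (j:ℕ)) := fun j => Iff.rfl
  simp only [this]
  rw [Fin.sum_univ_eq_sum_range (fun j => if (k:ℕ) ≤ j then 1 else 0) n]
  rw [Finset.range_eq_Ico, ← Finset.sum_Ico_consecutive _ (Nat.zero_le (k:ℕ))
    (Nat.lt_succ_iff.mp k.isLt)]
  rw [Finset.sum_eq_zero (fun j hj => by
    simp [Nat.not_le.mpr (Finset.mem_Ico.mp hj).2]), zero_add]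
  rw [Finset.sum_congr rfl (fun j hj => if_pos (Finset.mem_Ico.mp hj).1)]
  simp [Nat.card_Ico]

lemma count2 (k : Fin (n+1)) (σ : Perm (Fin n)) :
    (∑ i : Fin n, if k ≤ castSucc (σ i) then 1 else 0) = n - k := by
  rw [Equiv.sum_comp σ (fun x => if k ≤ castSucc x then 1 else 0)]
  exact count1 k

lemma sum_split (k : Fin (n+1)) (f : Fin (n+2) → ℕ) :
    (∑ x : Fin (n+2), f x)
      = f (last (n+1)) + f (castSucc k) + ∑ i : Fin n, f (emb k i) := by
  rw [Fin.sum_univ_castSucc, Fin.sum_univ_succAbove (fun y => f (castSucc y)) k]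
  simp only [emb]
  omega

lemma inv_F (k : Fin (n+1)) (σ : Perm (Fin n)) :
    invStat (F k σ) = invStat σ + (2 * (n - (k:ℕ)) + 1) := by
  rw [invStat_eq_sum σ, invStat_eq_sum]
  rw [sum_split k]
  simp only [sum_split k]
  simp only [F_emb, F_castSucc_self, F_last, not_last_lt, false_and, if_false,
    and_false, Finset.sum_const_zero, zero_add, add_zero,
    Fin.castSucc_lt_last, true_and, and_true, lt_self_iff_false]
  have hlt : ∀ j : Fin n, (castSucc k < emb k j) ↔ (k ≤ castSucc j) := by
    intro j
    rw [emb, Fin.castSucc_lt_castSucc_iff, Fin.lt_succAbove_iff_le_castSucc]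
  have hemb : ∀ i j : Fin n, (emb k i < emb k j) ↔ i < j := fun i j => emb_lt_iff k
  have hembl : ∀ i : Fin n, emb k i < last (n+1) := fun i => Fin.castSucc_lt_last _
  simp only [hlt, hemb, hembl, true_and, if_true]
  simp only [and_true]
  rw [Finset.sum_add_distrib]
  rw [count1 k, count2 k σ]
  omega

lemma invol_apply {σ : Perm (Fin m)} (h : σ * σ = 1) (i : Fin m) : σ (σ i) = i := by
  have := DFunLike.congr_fun h i
  simpa [Perm.mul_apply] using this

lemma mem_Invols {σ : Perm (Fin m)} : σ ∈ Invols m ↔ σ * σ = 1 := by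
  simp [Invols]

lemma ext_invol {σ : Perm (Fin m)} (h : σ * σ = 1) : ext σ * ext σ = 1 := by
  ext x
  induction x using Fin.lastCases with
  | last => simp [Perm.mul_apply]
  | cast i => simp [Perm.mul_apply, invol_apply h]

lemma F_invol {k : Fin (n+1)} {σ : Perm (Fin n)} (h : σ * σ = 1) :
    F k σ * F k σ = 1 := by
  ext x
  rcases cases3 k x with hx | hx | ⟨i, hx⟩ <;> subst hx <;>
    simp [Perm.mul_apply, invol_apply h]

lemma sum_fix :
    ∑ τ ∈ (Invols (n+1+1)).filter (fun τ => τ (last (n+1)) = last (n+1)),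
      (X : Polynomial ℚ) ^ invStat τ = IPoly (n+1) := by
  rw [IPoly]
  refine (Finset.sum_bij (fun σ _ => ext σ) ?_ ?_ ?_ ?_).symm
  · intro σ hσ
    rw [Finset.mem_filter]
    exact ⟨mem_Invols.mpr (ext_invol (mem_Invols.mp hσ)), ext_last σ⟩
  · intro a ha b hb hab
    ext i
    have := DFunLike.congr_fun hab (castSucc i)
    exact congrArg Fin.val (by simpa using this)
  · intro τ hτ
    rw [Finset.mem_filter] at hτ
    obtain ⟨hτ2, hτl⟩ := hτ
    have hτ2 := mem_Invols.mp hτ2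
    have hτa : ∀ x, τ (τ x) = x := invol_apply hτ2
    have hne : ∀ i : Fin (n+1), τ (castSucc i) ≠ last (n+1) := by
      intro i h
      exact (Fin.castSucc_lt_last i).ne (τ.injective (h.trans hτl.symm))
    have hg : ∀ i, castSucc ((τ (castSucc i)).castPred (hne i)) = τ (castSucc i) :=
      fun i => Fin.castSucc_castPred _ _
    have hinv : Function.Involutive (fun i => (τ (castSucc i)).castPred (hne i)) := by
      intro i
      apply Fin.castSucc_injective
      rw [hg, hg, hτa]
    refine ⟨hinv.toPerm _, mem_Invols.mpr ?_, ?_⟩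
    · ext i
      simp only [Perm.mul_apply, Perm.one_apply, Function.Involutive.coe_toPerm]
      exact congrArg Fin.val (hinv i)
    · ext x
      induction x using Fin.lastCases with
      | last => simp [hτl]
      | cast i => simp [Function.Involutive.toPerm, hg i]
  · intro σ hσ
    rw [inv_ext]

lemma sum_nonfix :
    ∑ τ ∈ (Invols (n+1+1)).filter (fun τ => τ (last (n+1)) ≠ last (n+1)),
      (X : Polynomial ℚ) ^ invStat τ
    = ∑ p ∈ (Finset.univ : Finset (Fin (n+1))) ×ˢ Invols n,
        (X : Polynomial ℚ) ^ (invStat p.2 + (2 * (n - (p.1 : ℕ)) + 1)) := by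
  refine (Finset.sum_bij (fun p _ => F p.1 p.2) ?_ ?_ ?_ ?_).symm
  · intro p hp
    rw [Finset.mem_product] at hp
    rw [Finset.mem_filter]
    refine ⟨mem_Invols.mpr (F_invol (mem_Invols.mp hp.2)), ?_⟩
    rw [F_last]
    exact (Fin.castSucc_lt_last _).ne
  · intro a ha b hb hab
    have hk : a.1 = b.1 := by
      have := DFunLike.congr_fun hab (last (n+1))
      simpa [Fin.castSucc_inj] using this
    have hσ : a.2 = b.2 := by
      ext i
      have := DFunLike.congr_fun hab (emb a.1 i)
      rw [F_emb, hk, F_emb] at this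
      exact congrArg Fin.val (emb_injective b.1 this)
    exact Prod.ext hk hσ
  · intro τ hτ
    rw [Finset.mem_filter] at hτ
    obtain ⟨hτ2, hτl⟩ := hτ
    have hτ2 := mem_Invols.mp hτ2
    have hτa : ∀ x, τ (τ x) = x := invol_apply hτ2
    set k : Fin (n+1) := (τ (last (n+1))).castPred hτl with hkdef
    have hk : castSucc k = τ (last (n+1)) := Fin.castSucc_castPred _ _
    have hkl : τ (castSucc k) = last (n+1) := by rw [hk, hτa]
    have hspec : ∀ i : Fin n, ∃ j, τ (emb k i) = emb k j := by
      intro i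
      rcases cases3 k (τ (emb k i)) with h | h | h
      · exfalso
        apply emb_ne_castSucc k i
        have : τ (τ (emb k i)) = τ (last (n+1)) := by rw [h]
        rw [hτa, ← hk] at this
        exact this
      · exfalso
        apply emb_ne_last k i
        have : τ (τ (emb k i)) = τ (castSucc k) := by rw [h]
        rw [hτa, hkl] at this
        exact this
      · exact h
    have hu : ∀ i, τ (emb k i) = emb k (Classical.choose (hspec i)) :=
      fun i => Classical.choose_spec (hspec i)
    have hinv : Function.Involutive (fun i => Classical.choose (hspec i)) := by
      intro i
      apply emb_injective k
      rw [← hu, ← hu, hτa]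
    refine ⟨(k, hinv.toPerm _), Finset.mem_product.mpr ⟨Finset.mem_univ _, mem_Invols.mpr ?_⟩, ?_⟩
    · ext i
      simp only [Perm.mul_apply, Perm.one_apply, Function.Involutive.coe_toPerm]
      exact congrArg Fin.val (hinv i)
    · ext x
      rcases cases3 k x with hx | hx | ⟨i, hx⟩ <;> subst hx
      · rw [F_last, hk]
      · rw [F_castSucc_self, hkl]
      · simp only [F_emb, Function.Involutive.coe_toPerm]
        exact congrArg Fin.val (hu i).symm
  · intro p hp
    rw [inv_F]

lemma gPoly_eq (n : ℕ) :
    gPoly (n+2) = ∑ k : Fin (n+1), (X : Polynomial ℚ) ^ (2 * (n - (k:ℕ)) + 1) := by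
  rw [gPoly]
  have h1 : n + 2 - 1 = n + 1 := rfl
  rw [h1, Fin.sum_univ_eq_sum_range (fun k => (X:Polynomial ℚ) ^ (2*(n-k)+1)) (n+1)]
  rw [← Finset.sum_range_reflect (fun j => (X:Polynomial ℚ) ^ (1 + 2*j)) (n+1)]
  refine Finset.sum_congr rfl (fun k hk => ?_)
  congr 1
  rw [Finset.mem_range] at hk
  omega

lemma recur (n : ℕ) : IPoly (n+2) = IPoly (n+1) + gPoly (n+2) * IPoly n := by
  have hsplit := Finset.sum_filter_add_sum_filter_not (Invols (n+1+1))
    (fun τ => τ (last (n+1)) = last (n+1)) (fun τ => (X : Polynomial ℚ) ^ invStat τ)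
  have : IPoly (n+2) =
      (∑ τ ∈ (Invols (n+1+1)).filter (fun τ => τ (last (n+1)) = last (n+1)),
        (X : Polynomial ℚ) ^ invStat τ) +
      (∑ τ ∈ (Invols (n+1+1)).filter (fun τ => ¬ τ (last (n+1)) = last (n+1)),
        (X : Polynomial ℚ) ^ invStat τ) := by
    rw [hsplit, IPoly]
  rw [this, sum_fix, sum_nonfix]
  congr 1
  rw [Finset.sum_product, gPoly_eq, IPoly, Finset.sum_mul]
  refine Finset.sum_congr rfl (fun k _ => ?_)
  rw [Finset.mul_sum]
  refine Finset.sum_congr rfl (fun σ _ => ?_)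
  rw [pow_add, mul_comm]

lemma Amat_succ (m : ℕ) : Amat (m+2) = Amat (m+1) * !![1,1; gPoly (m+2), 0] := by
  have h1 : m + 2 - 1 = m + 1 := rfl
  have h2 : m + 1 - 1 = m := rfl
  rw [Amat, Amat, h1, h2, List.range_succ, List.map_append, List.prod_append]
  simp

lemma Amat_zero : Amat 0 = 1 := rfl
lemma Amat_one : Amat 1 = 1 := rfl

lemma Amat_col (m : ℕ) :
    Amat (m+1) 0 1 + Amat (m+1) 1 1 = Amat m 0 0 + Amat m 1 0 := by
  cases m with
  | zero => simp [Amat_zero, Amat_one, Matrix.one_apply]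
  | succ m =>
    rw [Amat_succ m]
    simp [Matrix.mul_apply, Fin.sum_univ_two]

lemma Amat_rec (m : ℕ) :
    Amat (m+2) 0 0 + Amat (m+2) 1 0
      = (Amat (m+1) 0 0 + Amat (m+1) 1 0) + gPoly (m+2) * (Amat m 0 0 + Amat m 1 0) := by
  rw [Amat_succ m]
  simp only [Matrix.mul_apply, Fin.sum_univ_two]
  rw [← Amat_col m]
  simp [Matrix.cons_val_zero, Matrix.cons_val_one]
  ring

lemma IPoly_zero : IPoly 0 = 1 := by
  have h1 : Invols 0 = {1} := by
    apply Finset.eq_singleton_iff_unique_mem.mpr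
    constructor
    · simp [Invols]
    · intro σ _
      exact Subsingleton.elim σ 1
  rw [IPoly, h1, Finset.sum_singleton]
  have : invStat (1 : Perm (Fin 0)) = 0 := by
    simp [invStat]
  rw [this, pow_zero]

lemma IPoly_one : IPoly 1 = 1 := by
  have h1 : Invols 1 = {1} := by
    apply Finset.eq_singleton_iff_unique_mem.mpr
    constructor
    · simp [Invols]
    · intro σ _
      exact Subsingleton.elim σ 1
  rw [IPoly, h1, Finset.sum_singleton]
  have : invStat (1 : Perm (Fin 1)) = 0 := by
    rw [invStat, Finset.card_eq_zero]
    apply Finset.filter_false_of_mem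
    intro p _
    simp [Subsingleton.elim p.1 p.2]
  rw [this, pow_zero]

lemma key : ∀ m : ℕ, IPoly m = Amat m 0 0 + Amat m 1 0 := by
  intro m
  induction m using Nat.strong_induction_on with
  | _ m ih =>
    match m with
    | 0 => rw [IPoly_zero, Amat_zero]; simp [Matrix.one_apply]
    | 1 => rw [IPoly_one, Amat_one]; simp [Matrix.one_apply]
    | (m+2) =>
      rw [recur m, Amat_rec m, ih (m+1) (by omega), ih m (by omega)]

end InvProof

theorem involution_inversion_matrix_product (n : ℕ) (hn : 2 ≤ n) :
    IPoly n = Amat n 0 0 + Amat n 1 0 :=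
  InvProof.key n
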